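/- With the same setting, if x₁ = Hx₁' and x₂ = Hx₂' are distinct nonzero orbits in R/H whose images under ρ : R/H → S/H are distinct (where S = ℤ/p^{r-1}ℤ), then Tr_{K/ℚ}(f_{x₁} · conj(f_{x₂})) = 0. -/

import Mathlib

open Finset IntermediateField

set_option maxHeartbeats 1000000
set_option synthInstance.maxHeartbeats 400000



/-- The Gaussian period `f_{Hx} = Σ_{h ∈ H} ζ^(h·x)` attached to the orbit of `x`
under a subgroup `H` of `(ℤ/mℤ)ˣ`. -/
noncomputable def gaussPeriod {m : ℕ} (ζ : ℂ) (H : Subgroup (ZMod m)ˣ) (x : ZMod m) : ℂ :=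
  ∑ᶠ h : H, ζ ^ (((h : (ZMod m)ˣ) : ZMod m) * x).val

/-- `K` is the fixed field of `H` acting on `ℚ(ζ)` by `σ_h(ζ) = ζ^h`: an element
`z ∈ ℂ` lies in `K` iff `z ∈ ℚ(ζ)` and `z` is fixed by every `ℚ`-automorphism `σ`
of `ℚ(ζ)` sending `ζ` to `ζ^h` for some `h ∈ H`. -/
def IsHFixedField {m : ℕ} (ζ : ℂ) (H : Subgroup (ZMod m)ˣ)
    (K : IntermediateField ℚ ℂ) : Prop :=
  ∀ z : ℂ, z ∈ K ↔ ∃ hz : z ∈ IntermediateField.adjoin ℚ ({ζ} : Set ℂ),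
    ∀ σ : (IntermediateField.adjoin ℚ ({ζ} : Set ℂ)) ≃ₐ[ℚ]
        (IntermediateField.adjoin ℚ ({ζ} : Set ℂ)),
      (∃ h : H, (σ ⟨ζ, IntermediateField.subset_adjoin ℚ {ζ} rfl⟩ : ℂ) =
          ζ ^ (((h : (ZMod m)ˣ) : ZMod m)).val) →
      (σ ⟨z, hz⟩ : ℂ) = z

/-- if `x₁ = Hx₁'` and `x₂ = Hx₂'` are distinct nonzero orbits in
`R/H` whose images under `ρ : R/H → S/H` (`S = ℤ/p^(r−1)ℤ`) are distinct, then
`Tr_{K/ℚ}(f_{x₁} · conj(f_{x₂})) = 0`. -/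


lemma geomZero {η : ℂ} {m : ℕ} (h1 : η ≠ 1) (hη : η ^ m = 1) :
    ∑ k ∈ Finset.range m, η ^ k = 0 := by
  rw [geom_sum_eq h1, hη, sub_self, zero_div]

lemma zmodSumVal {m : ℕ} [NeZero m] (f : ℕ → ℂ) :
    ∑ x : ZMod m, f x.val = ∑ k ∈ Finset.range m, f k :=
  Finset.sum_nbij' (i := fun x => x.val) (j := fun k => (k : ZMod m))
    (fun x _ => Finset.mem_range.2 (ZMod.val_lt x))
    (fun k _ => Finset.mem_univ _)
    (fun x _ => by simp [ZMod.natCast_val])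
    (fun k hk => ZMod.val_cast_of_lt (Finset.mem_range.1 hk))
    (fun x _ => rfl)

lemma sumPrimVanish (p r : ℕ) (hp : p.Prime) (hr : 2 ≤ r) {ζ : ℂ}
    (hζ : IsPrimitiveRoot ζ (p ^ r)) (c : ZMod (p ^ r))
    (hc : ¬ (p ^ (r - 1) ∣ c.val)) :
    ∑ ξ ∈ primitiveRoots (p ^ r) ℂ, ξ ^ c.val = 0 := by
  have hr1 : 1 ≤ r := le_trans (by norm_num) hr
  have hm : 0 < p ^ r := pow_pos hp.pos r
  have hm' : 0 < p ^ (r - 1) := pow_pos hp.pos _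
  haveI : NeZero (p ^ r) := ⟨hm.ne'⟩
  haveI : NeZero (p ^ (r - 1)) := ⟨hm'.ne'⟩
  have hpr : p * p ^ (r - 1) = p ^ r := by
    rw [← pow_succ']
    congr 1
    omega
  -- pow mod
  have hmod : ∀ k : ℕ, ζ ^ (k % p ^ r) = ζ ^ k := by
    intro k
    conv_rhs => rw [← Nat.mod_add_div k (p ^ r)]
    rw [pow_add, pow_mul, hζ.pow_eq_one, one_pow, mul_one]
  have hEmul : ∀ a b : ZMod (p ^ r), ζ ^ (a * b).val = (ζ ^ a.val) ^ b.val := by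
    intro a b
    rw [ZMod.val_mul, hmod, pow_mul]
  -- Step 1 : reindex primitive roots by units
  have step1 : ∑ ξ ∈ primitiveRoots (p ^ r) ℂ, ξ ^ c.val
      = ∑ t : (ZMod (p ^ r))ˣ, ζ ^ (((t : ZMod (p ^ r)) * c).val) := by
    symm
    refine Finset.sum_bij (fun t _ => ζ ^ (t : ZMod (p ^ r)).val) ?_ ?_ ?_ ?_
    · intro t _
      exact (mem_primitiveRoots hm).2 (hζ.pow_of_coprime _ (ZMod.val_coe_unit_coprime t))
    · intro t₁ _ t₂ _ hEq
      have := hζ.pow_inj (ZMod.val_lt _) (ZMod.val_lt _) hEq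
      exact Units.ext (ZMod.val_injective _ this)
    · intro ξ hξ
      obtain ⟨i, hik, hcop, rfl⟩ := (hζ.isPrimitiveRoot_iff).1 ((mem_primitiveRoots hm).1 hξ)
      refine ⟨ZMod.unitOfCoprime i hcop, Finset.mem_univ _, ?_⟩
      show ζ ^ ((ZMod.unitOfCoprime i hcop : ZMod (p ^ r))).val = ζ ^ i
      rw [ZMod.coe_unitOfCoprime, ZMod.val_natCast, Nat.mod_eq_of_lt hik]
    · intro t _
      rw [hEmul]
  rw [step1]
  -- the split bijection
  set ψ : ZMod (p ^ (r - 1)) → ZMod (p ^ r) := fun y => ((p * y.val : ℕ) : ZMod (p ^ r)) with hψ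
  have hψval : ∀ y, (ψ y).val = p * y.val := by
    intro y
    apply ZMod.val_cast_of_lt
    calc p * y.val < p * p ^ (r - 1) := (mul_lt_mul_iff_right₀ hp.pos).2 (ZMod.val_lt y)
      _ = p ^ r := hpr
  have hψnotunit : ∀ y, ¬ IsUnit (ψ y) := by
    intro y hy
    have hcop : Nat.Coprime (ψ y).val (p ^ r) := ZMod.val_coe_unit_coprime hy.unit
    rw [hψval] at hcop
    have h1 : Nat.Coprime p p :=
      Nat.Coprime.coprime_dvd_right (dvd_pow_self p (by omega))
        (Nat.Coprime.coprime_dvd_left (dvd_mul_right p y.val) hcop)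
    have h2 : p = 1 := by simpa [Nat.Coprime, Nat.gcd_self] using h1
    have := hp.two_le
    omega
  have hF : Function.Bijective
      (fun s : (ZMod (p ^ r))ˣ ⊕ ZMod (p ^ (r - 1)) =>
        Sum.elim (fun t : (ZMod (p ^ r))ˣ => (t : ZMod (p ^ r))) ψ s) := by
    constructor
    · rintro (t₁ | y₁) (t₂ | y₂) h <;>
        simp only [Sum.elim_inl, Sum.elim_inr] at h
      · exact congrArg Sum.inl (Units.ext h)
      · exact absurd (h ▸ (t₁ : (ZMod (p ^ r))ˣ).isUnit) (hψnotunit y₂)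
      · exact absurd (h ▸ (hψnotunit y₁)) (by simp [(t₂ : (ZMod (p ^ r))ˣ).isUnit])
      · refine congrArg Sum.inr ?_
        have h' := congrArg ZMod.val h
        rw [hψval, hψval] at h'
        exact ZMod.val_injective _ (Nat.eq_of_mul_eq_mul_left hp.pos h')
    · intro x
      by_cases hx : IsUnit x
      · exact ⟨Sum.inl hx.unit, hx.unit_spec⟩
      · have hxx : ((x.val : ℕ) : ZMod (p ^ r)) = x := by
          rw [ZMod.natCast_val, ZMod.cast_id]
        have hncop : ¬ Nat.Coprime x.val (p ^ r) := fun h =>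
          hx (hxx ▸ (ZMod.isUnit_iff_coprime x.val (p ^ r)).2 h)
        have hpdvd : p ∣ x.val := by
          by_contra hpd
          exact hncop (Nat.Coprime.pow_right _ ((hp.coprime_iff_not_dvd).2 hpd).symm)
        obtain ⟨k, hk⟩ := hpdvd
        have hklt : k < p ^ (r - 1) := by
          have := ZMod.val_lt x
          rw [hk] at this
          rw [← hpr] at this
          exact lt_of_mul_lt_mul_left this (Nat.zero_le p)
        refine ⟨Sum.inr (k : ZMod (p ^ (r - 1))), ?_⟩
        simp only [Sum.elim_inr, hψ]
        rw [ZMod.val_cast_of_lt hklt, ← hk]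
        rw [ZMod.natCast_val, ZMod.cast_id]
  have hczero : c.val ≠ 0 := fun h => hc (h ▸ dvd_zero _)
  -- total sum over ZMod (p^r) vanishes
  have total : ∑ x : ZMod (p ^ r), ζ ^ ((x * c).val) = 0 := by
    have hE2 : ∀ x : ZMod (p ^ r), ζ ^ ((x * c).val) = (ζ ^ c.val) ^ x.val := by
      intro x
      rw [ZMod.val_mul, hmod, mul_comm, pow_mul]
    calc ∑ x : ZMod (p ^ r), ζ ^ ((x * c).val)
        = ∑ x : ZMod (p ^ r), (ζ ^ c.val) ^ x.val := by
          exact Finset.sum_congr rfl fun x _ => hE2 x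
      _ = ∑ k ∈ Finset.range (p ^ r), (ζ ^ c.val) ^ k := zmodSumVal _
      _ = 0 := by
          refine geomZero (hζ.pow_ne_one_of_pos_of_lt hczero
            (ZMod.val_lt c)) ?_
          rw [← pow_mul, mul_comm, pow_mul, hζ.pow_eq_one, one_pow]
  -- sum over non-units vanishes
  have nonunit : ∑ y : ZMod (p ^ (r - 1)), ζ ^ ((ψ y * c).val) = 0 := by
    have hE3 : ∀ y : ZMod (p ^ (r - 1)), ζ ^ ((ψ y * c).val)
        = (ζ ^ (p * c.val)) ^ y.val := by
      intro y
      rw [ZMod.val_mul, hψval, hmod,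
        show p * y.val * c.val = (p * c.val) * y.val from by ring, pow_mul]
    have harr : ∀ v : ℕ, p * v * p ^ (r - 1) = p ^ r * v := fun v => by
      rw [← hpr]; ring
    have hθ1 : ζ ^ (p * c.val) ≠ 1 := by
      intro h
      rw [hζ.pow_eq_one_iff_dvd] at h
      exact hc ((Nat.mul_dvd_mul_iff_left hp.pos).1 (by rw [hpr]; exact h))
    calc ∑ y : ZMod (p ^ (r - 1)), ζ ^ ((ψ y * c).val)
        = ∑ y : ZMod (p ^ (r - 1)), (ζ ^ (p * c.val)) ^ y.val := by
          exact Finset.sum_congr rfl fun y _ => hE3 y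
      _ = ∑ k ∈ Finset.range (p ^ (r - 1)), (ζ ^ (p * c.val)) ^ k := zmodSumVal _
      _ = 0 := by
          refine geomZero hθ1 ?_
          rw [← pow_mul, harr c.val, pow_mul, hζ.pow_eq_one, one_pow]
  have hsplit := Fintype.sum_bijective _ hF
    (fun s => ζ ^ (((Sum.elim (fun t : (ZMod (p ^ r))ˣ => (t : ZMod (p ^ r))) ψ s) * c).val))
    (fun x => ζ ^ ((x * c).val)) (fun s => rfl)
  rw [Fintype.sum_sum_type] at hsplit
  simp only [Sum.elim_inl, Sum.elim_inr] at hsplit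
  rw [total, nonunit, add_zero] at hsplit
  exact hsplit

open IntermediateField in
lemma traceVanish (p r : ℕ) (hp : p.Prime) (hr : 2 ≤ r) {ζ : ℂ}
    (hζ : IsPrimitiveRoot ζ (p ^ r)) {I : Type} [Fintype I] (c : I → ZMod (p ^ r))
    (hc : ∀ i, ¬ (p ^ (r - 1) ∣ (c i).val)) :
    Algebra.trace ℚ (adjoin ℚ ({ζ} : Set ℂ))
      (∑ i, (⟨ζ, subset_adjoin ℚ {ζ} rfl⟩ : adjoin ℚ ({ζ} : Set ℂ)) ^ (c i).val) = 0 := by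
  have hm : 0 < p ^ r := pow_pos hp.pos r
  set n : ℕ+ := ⟨p ^ r, hm⟩ with hn
  have hζ' : IsPrimitiveRoot ζ ((n : ℕ)) := hζ
  have hint : IsIntegral ℚ ζ := (hζ.isIntegral hm).tower_top
  haveI : FiniteDimensional ℚ (adjoin ℚ ({ζ} : Set ℂ)) :=
    IntermediateField.adjoin.finiteDimensional hint
  haveI cyc : IsCyclotomicExtension {(n : ℕ)} ℚ (adjoin ℚ ({ζ} : Set ℂ)) := by
    refine IsCyclotomicExtension.equiv _ _ _ (h := ?_)
      (.refl : (adjoin ℚ ({ζ} : Set ℂ)).toSubalgebra ≃ₐ[ℚ] _)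
    rw [IntermediateField.adjoin_simple_toSubalgebra_of_isAlgebraic hint.isAlgebraic]
    exact hζ'.adjoin_isCyclotomicExtension ℚ
  set ζL : adjoin ℚ ({ζ} : Set ℂ) := ⟨ζ, subset_adjoin ℚ {ζ} rfl⟩ with hζLdef
  have hζL : IsPrimitiveRoot ζL (n : ℕ) := by
    apply IsPrimitiveRoot.coe_submonoidClass_iff.1
    exact hζ'
  have hirr : Irreducible (Polynomial.cyclotomic (n : ℕ) ℚ) :=
    Polynomial.cyclotomic.irreducible_rat hm
  have inner : ∀ N : ℕ, ∑ σ : (adjoin ℚ ({ζ} : Set ℂ)) →ₐ[ℚ] ℂ, (σ ζL) ^ N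
      = ∑ ξ ∈ primitiveRoots (p ^ r) ℂ, ξ ^ N := by
    intro N
    have := Fintype.sum_equiv (hζL.embeddingsEquivPrimitiveRoots ℂ hirr)
      (fun σ => (σ ζL) ^ N) (fun ν => (ν : ℂ) ^ N)
      (fun σ => by
        show σ ζL ^ N = ((hζL.embeddingsEquivPrimitiveRoots ℂ hirr) σ : ℂ) ^ N
        rw [hζL.embeddingsEquivPrimitiveRoots_apply_coe ℂ hirr σ])
    rw [this]
    exact Finset.sum_coe_sort (primitiveRoots (p ^ r) ℂ) (fun ξ => ξ ^ N)
  have h0 : algebraMap ℚ ℂ (Algebra.trace ℚ (adjoin ℚ ({ζ} : Set ℂ))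
      (∑ i, ζL ^ (c i).val)) = 0 := by
    rw [trace_eq_sum_embeddings]
    calc ∑ σ : (adjoin ℚ ({ζ} : Set ℂ)) →ₐ[ℚ] ℂ, σ (∑ i, ζL ^ (c i).val)
        = ∑ σ : (adjoin ℚ ({ζ} : Set ℂ)) →ₐ[ℚ] ℂ, ∑ i, (σ ζL) ^ (c i).val := by
          refine Finset.sum_congr rfl fun σ _ => ?_
          rw [map_sum]
          exact Finset.sum_congr rfl fun i _ => map_pow σ ζL _
      _ = ∑ i, ∑ σ : (adjoin ℚ ({ζ} : Set ℂ)) →ₐ[ℚ] ℂ, (σ ζL) ^ (c i).val :=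
          Finset.sum_comm
      _ = 0 := by
          refine Finset.sum_eq_zero fun i _ => ?_
          rw [inner]
          exact sumPrimVanish p r hp hr hζ (c i) (hc i)
  have := (algebraMap ℚ ℂ).injective
  apply this
  rw [h0, map_zero]

theorem stmt5 (p r e : ℕ) (hp : p.Prime) (hodd : Odd p) (hr : 2 ≤ r)
    (he : 0 < e) (hdvd : e ∣ p - 1)
    (ζ : ℂ) (hζ : IsPrimitiveRoot ζ (p ^ r))
    (H : Subgroup (ZMod (p ^ r))ˣ) (hH : Nat.card H = e)
    (K : IntermediateField ℚ ℂ) (hK : IsHFixedField ζ H K)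
    (x₁ x₂ : ZMod (p ^ r)) (hx₁ : x₁ ≠ 0) (hx₂ : x₂ ≠ 0)
    (horb : ∀ h : H, x₂ ≠ ((h : (ZMod (p ^ r))ˣ) : ZMod (p ^ r)) * x₁)
    (hrho : ∀ h : H,
      ZMod.castHom (pow_dvd_pow p (Nat.sub_le r 1)) (ZMod (p ^ (r - 1))) x₂ ≠
        ZMod.castHom (pow_dvd_pow p (Nat.sub_le r 1)) (ZMod (p ^ (r - 1)))
          (((h : (ZMod (p ^ r))ˣ) : ZMod (p ^ r)) * x₁))
    (w : K)
    (hw : (w : ℂ) = gaussPeriod ζ H x₁ * (starRingEnd ℂ) (gaussPeriod ζ H x₂)) :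
    Algebra.trace ℚ K w = 0 := by
  have hm : 0 < p ^ r := pow_pos hp.pos r
  have hm' : 0 < p ^ (r - 1) := pow_pos hp.pos _
  haveI : NeZero (p ^ r) := ⟨hm.ne'⟩
  haveI : NeZero (p ^ (r - 1)) := ⟨hm'.ne'⟩
  haveI : Fintype H := Fintype.ofFinite _
  -- basic ζ arithmetic
  have hmod : ∀ k : ℕ, ζ ^ (k % p ^ r) = ζ ^ k := by
    intro k
    conv_rhs => rw [← Nat.mod_add_div k (p ^ r)]
    rw [pow_add, pow_mul, hζ.pow_eq_one, one_pow, mul_one]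
  have hEadd : ∀ a b : ZMod (p ^ r), ζ ^ a.val * ζ ^ b.val = ζ ^ (a + b).val := by
    intro a b
    rw [ZMod.val_add, hmod, pow_add]
  have hEconj : ∀ b : ZMod (p ^ r), (starRingEnd ℂ) (ζ ^ b.val) = ζ ^ (-b).val := by
    intro b
    have habs : ‖ζ‖ = 1 := hζ.norm'_eq_one hm.ne'
    have habs' : ‖ζ ^ b.val‖ = 1 := by
      rw [norm_pow, habs, one_pow]
    have h1 : ζ ^ (-b).val * ζ ^ b.val = 1 := by
      rw [hEadd, neg_add_cancel, ZMod.val_zero, pow_zero]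
    rw [← Complex.inv_eq_conj habs']
    exact (eq_inv_of_mul_eq_one_left h1).symm
  -- the fixed field is contained in ℚ(ζ)
  have hKL : K ≤ adjoin ℚ ({ζ} : Set ℂ) := fun z hz => ((hK z).1 hz).elim fun h _ => h
  have hint : IsIntegral ℚ ζ := ((hζ.isIntegral hm).tower_top : IsIntegral ℚ ζ)
  haveI : FiniteDimensional ℚ (adjoin ℚ ({ζ} : Set ℂ)) :=
    IntermediateField.adjoin.finiteDimensional hint
  letI : Algebra K (adjoin ℚ ({ζ} : Set ℂ)) := (IntermediateField.inclusion hKL).toAlgebra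
  haveI : IsScalarTower ℚ K (adjoin ℚ ({ζ} : Set ℂ)) :=
    IsScalarTower.of_algebraMap_eq fun q => by
      apply Subtype.ext
      rfl
  haveI : FiniteDimensional ℚ K := FiniteDimensional.left ℚ K (adjoin ℚ ({ζ} : Set ℂ))
  haveI : FiniteDimensional K (adjoin ℚ ({ζ} : Set ℂ)) :=
    FiniteDimensional.right ℚ K (adjoin ℚ ({ζ} : Set ℂ))
  -- the index family
  set c : H × H → ZMod (p ^ r) := fun i =>
    ((i.1 : (ZMod (p ^ r))ˣ) : ZMod (p ^ r)) * x₁ -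
      ((i.2 : (ZMod (p ^ r))ˣ) : ZMod (p ^ r)) * x₂ with hc
  have hcnd : ∀ i : H × H, ¬ (p ^ (r - 1) ∣ (c i).val) := by
    intro i hdvd'
    have hcast0 : (ZMod.castHom (pow_dvd_pow p (Nat.sub_le r 1)) (ZMod (p ^ (r - 1)))) (c i) = 0 := by
      rw [ZMod.castHom_apply, ← ZMod.natCast_val, ZMod.natCast_eq_zero_iff]
      exact hdvd'
    set φ := ZMod.castHom (pow_dvd_pow p (Nat.sub_le r 1)) (ZMod (p ^ (r - 1)))
    have hEq : φ (((i.1 : (ZMod (p ^ r))ˣ) : ZMod (p ^ r)) * x₁)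
        = φ (((i.2 : (ZMod (p ^ r))ˣ) : ZMod (p ^ r)) * x₂) := by
      have h' : φ (((i.1 : (ZMod (p ^ r))ˣ) : ZMod (p ^ r)) * x₁)
          - φ (((i.2 : (ZMod (p ^ r))ˣ) : ZMod (p ^ r)) * x₂) = 0 := by
        rw [← map_sub]
        exact hcast0
      exact sub_eq_zero.1 h'
    have hinv : ((((i.2)⁻¹ : H) : (ZMod (p ^ r))ˣ) : ZMod (p ^ r)) *
        (((i.2 : (ZMod (p ^ r))ˣ)) : ZMod (p ^ r)) = 1 := by
      push_cast
      rw [← Units.val_mul, inv_mul_cancel, Units.val_one]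
    apply hrho ((i.2)⁻¹ * i.1)
    have hcoe : ((((i.2)⁻¹ * i.1 : H) : (ZMod (p ^ r))ˣ) : ZMod (p ^ r))
        = ((((i.2)⁻¹ : H) : (ZMod (p ^ r))ˣ) : ZMod (p ^ r)) *
          (((i.1 : (ZMod (p ^ r))ˣ)) : ZMod (p ^ r)) := by
      push_cast
      rfl
    rw [hcoe, mul_assoc, map_mul, hEq, ← map_mul, ← mul_assoc, hinv, one_mul]
  -- identify the element
  set ζL : adjoin ℚ ({ζ} : Set ℂ) := ⟨ζ, subset_adjoin ℚ {ζ} rfl⟩ with hζL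
  have hz : algebraMap K (adjoin ℚ ({ζ} : Set ℂ)) w = ∑ i : H × H, ζL ^ (c i).val := by
    apply Subtype.ext
    have hlhs : ((algebraMap K (adjoin ℚ ({ζ} : Set ℂ)) w : adjoin ℚ ({ζ} : Set ℂ)) : ℂ)
        = (w : ℂ) := rfl
    rw [hlhs]
    push_cast
    rw [hw]
    -- expand the gauss periods
    rw [gaussPeriod, gaussPeriod, finsum_eq_sum_of_fintype, finsum_eq_sum_of_fintype]
    rw [map_sum]
    rw [Finset.sum_mul_sum, Fintype.sum_prod_type]
    refine Finset.sum_congr rfl fun i _ => Finset.sum_congr rfl fun j _ => ?_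
    rw [hEconj, hEadd]
    show ζ ^ ((_ : ZMod (p ^ r)) + -(_ : ZMod (p ^ r))).val = ζ ^ (c (i, j)).val
    rw [← sub_eq_add_neg]
  -- trace computation
  have htv : Algebra.trace ℚ (adjoin ℚ ({ζ} : Set ℂ)) (∑ i : H × H, ζL ^ (c i).val) = 0 :=
    traceVanish p r hp hr hζ c hcnd
  have htower : Algebra.trace ℚ (adjoin ℚ ({ζ} : Set ℂ))
      (algebraMap K (adjoin ℚ ({ζ} : Set ℂ)) w)
      = (Module.finrank K (adjoin ℚ ({ζ} : Set ℂ))) • Algebra.trace ℚ K w := by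
    rw [← Algebra.trace_trace (S := K), Algebra.trace_algebraMap, map_nsmul]
  rw [hz, htv] at htower
  have hpos : 0 < Module.finrank K (adjoin ℚ ({ζ} : Set ℂ)) := Module.finrank_pos
  have := htower.symm
  rw [nsmul_eq_mul] at this
  exact (mul_eq_zero.1 this).elim (fun h => absurd h (by positivity)) id
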